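/- Assume the additive-noise utilities of Assumption 1: U i (ω) = (Y i + X ω)⁺ with Y : ι → ℝ deterministic, X : Ω → ℝ a real random variable, and ℙ(∀ i, Y i + X ≥ 0) = 1. Then for every price vector q : ι → ℝ and every measurable decision rule d : Ω → Option ι that is user-optimal pointwise for (q, U ω), the expected profit is at most max_{i ∈ ι} (q i − c i)⁺ · ℙ(U i ≥ q i), where x⁺ = max(x, 0). (Intermediate upper bound on the expected profit from the paper's proof of Theorem 7.) -/

import Mathlib

open Finset MeasureTheory

/-- A decision `d` is user-optimal for prices `q` and utilities `u`. -/
def userOptimal {ι : Type*} [Fintype ι] (q u : ι → ℝ) : Option ι → Prop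
  | some i => 0 ≤ u i - q i ∧ ∀ j, u j - q j ≤ u i - q i
  | none => ∀ j, u j - q j < 0

/-- Profit of a decision: `q i - c i` if option `i` is accepted, `0` otherwise. -/
def profit {ι : Type*} (q c : ι → ℝ) : Option ι → ℝ
  | some i => q i - c i
  | none => 0

/-- Intermediate upper bound in the paper's proof of Theorem 7: under additive-noise
utilities `U i = (Y i + X)⁺` with `ℙ(∀ i, Y i + X ≥ 0) = 1`, any price menu `q` with
any measurable pointwise user-optimal decision rule has expected profit at most
`max_i (q i - c i)⁺ · ℙ(U i ≥ q i)`. -/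
theorem expected_profit_upper_bound {ι : Type*} [Fintype ι] [Nonempty ι]
    {Ω : Type*} [MeasurableSpace Ω] (ℙ : Measure Ω) [IsProbabilityMeasure ℙ]
    (c Y : ι → ℝ) (X : Ω → ℝ) (hX : Measurable X)
    (U : Ω → ι → ℝ) (hUdef : ∀ ω i, U ω i = max (Y i + X ω) 0)
    (hpos : ℙ {ω | ∀ i, 0 ≤ Y i + X ω} = 1)
    (q : ι → ℝ) (d : Ω → Option ι) (hd : ∀ o : Option ι, MeasurableSet {ω | d ω = o})
    (hopt : ∀ ω, userOptimal q (U ω) (d ω)) :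
    (∫ ω, profit q c (d ω) ∂ℙ) ≤
      univ.sup' univ_nonempty
        (fun i => max (q i - c i) 0 * (ℙ {ω | q i ≤ U ω i}).toReal) := by
  classical
  set m := univ.sup' univ_nonempty (fun j => Y j - q j) with hm
  set S : Finset ι := univ.filter (fun i => Y i - q i = m) with hS
  obtain ⟨i0, -, hi0⟩ := Finset.exists_mem_eq_sup' univ_nonempty (fun j => Y j - q j)
  have hSne : S.Nonempty := ⟨i0, by simp [hS, ← hi0, hm]⟩
  obtain ⟨istar, histarS, histar⟩ := Finset.exists_mem_eq_sup' hSne (fun i => max (q i - c i) 0)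
  have histarmax : Y istar - q istar = m := (Finset.mem_filter.1 histarS).2
  have histarbig : ∀ i ∈ S, max (q i - c i) 0 ≤ max (q istar - c istar) 0 := fun i hi =>
    (Finset.le_sup' _ hi).trans histar.le
  set E : Set Ω := {ω | q istar ≤ U ω istar} with hE
  have hEeq : E = {ω | q istar ≤ max (Y istar + X ω) 0} := by
    ext ω; simp [hE, hUdef]
  have hEmeas : MeasurableSet E := by
    rw [hEeq]
    exact measurableSet_le measurable_const ((measurable_const.add hX).max measurable_const)
  set A : Set Ω := {ω | ∀ i, 0 ≤ Y i + X ω} with hA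
  have hAmeas : MeasurableSet A := by
    have : A = ⋂ i, {ω | 0 ≤ Y i + X ω} := by ext ω; simp [hA]
    rw [this]
    exact MeasurableSet.iInter fun i =>
      measurableSet_le measurable_const (measurable_const.add hX)
  have hAc : ℙ Aᶜ = 0 := by
    rw [measure_compl hAmeas (measure_ne_top _ _), hpos]
    simp
  set g : Ω → ℝ := fun ω => E.indicator (fun _ => max (q istar - c istar) 0) ω with hg
  -- pointwise bound on A
  have hpt : ∀ ω ∈ A, profit q c (d ω) ≤ g ω := by
    intro ω hω
    have hU : ∀ i, U ω i = Y i + X ω := fun i => by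
      rw [hUdef]; exact max_eq_left (hω i)
    have hgnn : 0 ≤ g ω := Set.indicator_nonneg (fun _ _ => le_max_right _ _) ω
    cases hdo : d ω with
    | none => simpa [profit] using hgnn
    | some i =>
      have hoi := hopt ω
      rw [hdo] at hoi
      obtain ⟨h1, h2⟩ := hoi
      have hiS : i ∈ S := by
        have hle : Y i - q i ≤ m := Finset.le_sup' (f := fun j => Y j - q j) (Finset.mem_univ i)
        have h2' := h2 i0
        rw [hU i, hU i0] at h2'
        have hge : m ≤ Y i - q i := by rw [hm, hi0]; linarith
        exact Finset.mem_filter.2 ⟨Finset.mem_univ i, le_antisymm hle hge⟩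
      have hmi : Y i - q i = m := (Finset.mem_filter.1 hiS).2
      have h1' : 0 ≤ Y i + X ω - q i := by rw [hU i] at h1; linarith
      have hωE : ω ∈ E := by
        rw [hE]; show q istar ≤ U ω istar
        rw [hU istar]; linarith [histarmax, hmi]
      have : g ω = max (q istar - c istar) 0 := Set.indicator_of_mem hωE _
      rw [this]
      calc profit q c (some i) = q i - c i := rfl
        _ ≤ max (q i - c i) 0 := le_max_left _ _
        _ ≤ max (q istar - c istar) 0 := histarbig i hiS
  have hfeq : (fun ω => profit q c (d ω)) =
      fun ω => ∑ i, Set.indicator {ω' | d ω' = some i} (fun _ => q i - c i) ω := by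
    funext ω
    cases hdo : d ω with
    | none =>
      rw [Finset.sum_eq_zero]
      · rfl
      · intro i _
        exact Set.indicator_of_notMem (by simp [hdo]) _
    | some i =>
      rw [Finset.sum_eq_single i]
      · rw [Set.indicator_of_mem (by simp [hdo])]; rfl
      · intro j _ hj
        exact Set.indicator_of_notMem (by simp [hdo, Ne.symm hj]) _
      · simp
  have hfint : Integrable (fun ω => profit q c (d ω)) ℙ := by
    rw [hfeq]
    exact integrable_finset_sum _ fun i _ =>
      (integrable_indicator_iff (hd (some i))).2
        (integrableOn_const (measure_ne_top _ _))
  have hgint : Integrable g ℙ :=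
    (integrable_indicator_iff hEmeas).2 (integrableOn_const (measure_ne_top _ _))
  have hae : ∀ᵐ ω ∂ℙ, profit q c (d ω) ≤ g ω := by
    have hA1 : ∀ᵐ ω ∂ℙ, ω ∈ A := by
      rw [ae_iff]; exact hAc
    filter_upwards [hA1] with ω hω using hpt ω hω
  calc (∫ ω, profit q c (d ω) ∂ℙ) ≤ ∫ ω, g ω ∂ℙ := integral_mono_ae hfint hgint hae
    _ = max (q istar - c istar) 0 * (ℙ E).toReal := by
        rw [hg, integral_indicator_const _ hEmeas]
        simp [mul_comm, measureReal_def]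
    _ ≤ univ.sup' univ_nonempty
        (fun i => max (q i - c i) 0 * (ℙ {ω | q i ≤ U ω i}).toReal) :=
        Finset.le_sup' (f := fun i => max (q i - c i) 0 * (ℙ {ω | q i ≤ U ω i}).toReal)
          (Finset.mem_univ istar)
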